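/- For every θ ∈ Θ with |θ| ≤ ν₀/(2 L_a) and every v₀ ∈ V₀ there exists a unique element 𝒩_θ v₀ ∈ W₀ such that a_θ(𝒩_θ v₀, w̃) = − a_θ(v₀, w̃) for all w̃ ∈ W₀; moreover ‖𝒩_θ v₀‖₀ ≤ 2 L_a ν₀⁻¹ |θ| ‖v₀‖₀ and ‖v₀‖₀ ≤ ‖v₀ + 𝒩_θ v₀‖₀ ≤ 2 ‖v₀‖₀. -/

import Mathlib

noncomputable section

open scoped Classical

/-- An abstract family of non-negative bounded sesquilinear forms `a θ`, `b θ`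
(linear in the first argument, conjugate-linear in the second) on a complex Hilbert
space `H`, parametrised by `θ` in a compact subset `Θ` of `ℝⁿ`, such that
`(·,·)_θ := a θ + b θ` is a family of inner products whose norms are equivalent
to the norm of `H`. -/
structure FormFamily (n : ℕ) (H : Type*) [NormedAddCommGroup H] [InnerProductSpace ℂ H]
    [CompleteSpace H] where
  Θ : Set (EuclideanSpace ℝ (Fin n))
  compactΘ : IsCompact Θ
  a : EuclideanSpace ℝ (Fin n) → H → H → ℂ
  b : EuclideanSpace ℝ (Fin n) → H → H → ℂ
  a_addL : ∀ θ ∈ Θ, ∀ u v w : H, a θ (u + v) w = a θ u w + a θ v w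
  a_smulL : ∀ θ ∈ Θ, ∀ (c : ℂ) (u w : H), a θ (c • u) w = c * a θ u w
  a_addR : ∀ θ ∈ Θ, ∀ u v w : H, a θ u (v + w) = a θ u v + a θ u w
  a_smulR : ∀ θ ∈ Θ, ∀ (c : ℂ) (u w : H), a θ u (c • w) = starRingEnd ℂ c * a θ u w
  a_nonneg : ∀ θ ∈ Θ, ∀ u : H, 0 ≤ (a θ u u).re
  a_im : ∀ θ ∈ Θ, ∀ u : H, (a θ u u).im = 0
  a_bdd : ∀ θ ∈ Θ, ∃ C : ℝ, ∀ u w : H, ‖a θ u w‖ ≤ C * ‖u‖ * ‖w‖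
  b_addL : ∀ θ ∈ Θ, ∀ u v w : H, b θ (u + v) w = b θ u w + b θ v w
  b_smulL : ∀ θ ∈ Θ, ∀ (c : ℂ) (u w : H), b θ (c • u) w = c * b θ u w
  b_addR : ∀ θ ∈ Θ, ∀ u v w : H, b θ u (v + w) = b θ u v + b θ u w
  b_smulR : ∀ θ ∈ Θ, ∀ (c : ℂ) (u w : H), b θ u (c • w) = starRingEnd ℂ c * b θ u w
  b_nonneg : ∀ θ ∈ Θ, ∀ u : H, 0 ≤ (b θ u u).re
  b_im : ∀ θ ∈ Θ, ∀ u : H, (b θ u u).im = 0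
  b_bdd : ∀ θ ∈ Θ, ∃ C : ℝ, ∀ u w : H, ‖b θ u w‖ ≤ C * ‖u‖ * ‖w‖
  equivNorm : ∀ θ ∈ Θ, ∃ c₁ c₂ : ℝ, 0 < c₁ ∧ ∀ u : H,
    c₁ * ‖u‖ ^ 2 ≤ (a θ u u).re + (b θ u u).re ∧
      (a θ u u).re + (b θ u u).re ≤ c₂ * ‖u‖ ^ 2

namespace FormFamily

variable {n : ℕ} {H : Type*} [NormedAddCommGroup H] [InnerProductSpace ℂ H] [CompleteSpace H]

/-- The inner product `(u, w)_θ := a θ u w + b θ u w`. -/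
def ip (S : FormFamily n H) (θ : EuclideanSpace ℝ (Fin n)) (u w : H) : ℂ :=
  S.a θ u w + S.b θ u w

/-- The squared `θ`-norm `‖u‖_θ ^ 2 = (u, u)_θ`. -/
def nsq (S : FormFamily n H) (θ : EuclideanSpace ℝ (Fin n)) (u : H) : ℝ :=
  (S.ip θ u u).re

/-- The `θ`-norm `‖u‖_θ`. -/
def nrm (S : FormFamily n H) (θ : EuclideanSpace ℝ (Fin n)) (u : H) : ℝ :=
  Real.sqrt (S.nsq θ u)

/-- The degeneracy subspace `V_θ = {v : a_θ[v] = 0}`. -/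
def V (S : FormFamily n H) (θ : EuclideanSpace ℝ (Fin n)) : Set H :=
  {v : H | S.a θ v v = 0}

/-- `W_θ`, the orthogonal complement of `V_θ` in `H` with respect to `(·,·)_θ`. -/
def W (S : FormFamily n H) (θ : EuclideanSpace ℝ (Fin n)) : Set H :=
  {w : H | ∀ v ∈ S.V θ, S.ip θ w v = 0}

end FormFamily

/-- `f : H → ℂ` is a bounded conjugate-linear functional. -/
def IsBddConjLinear {H : Type*} [NormedAddCommGroup H] [InnerProductSpace ℂ H]
    (f : H → ℂ) : Prop :=
  (∀ u v : H, f (u + v) = f u + f v) ∧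
    (∀ (c : ℂ) (u : H), f (c • u) = starRingEnd ℂ c * f u) ∧
    ∃ C : ℝ, ∀ u : H, ‖f u‖ ≤ C * ‖u‖

/-- The homogenised form `a^h_θ(v,vt) = a''₀(v,vt)θ·θ - a₀(N_θ v, N_θ vt)`. -/
def ahom {n : ℕ} {H : Type*} [NormedAddCommGroup H] [InnerProductSpace ℂ H] [CompleteSpace H]
    (S : FormFamily n H) (a'' : H → H → Fin n → Fin n → ℂ)
    (N : EuclideanSpace ℝ (Fin n) → H → H) (θ : EuclideanSpace ℝ (Fin n)) (v vt : H) : ℂ :=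
  (∑ j, ∑ k, a'' v vt j k * (θ j : ℂ) * (θ k : ℂ)) - S.a 0 (N θ v) (N θ vt)

private lemma sesq_hermitian {H : Type*} [NormedAddCommGroup H] [InnerProductSpace ℂ H]
    (φ : H → H → ℂ)
    (haddL : ∀ u v w : H, φ (u + v) w = φ u w + φ v w)
    (hsmulL : ∀ (c : ℂ) (u w : H), φ (c • u) w = c * φ u w)
    (haddR : ∀ u v w : H, φ u (v + w) = φ u v + φ u w)
    (hsmulR : ∀ (c : ℂ) (u w : H), φ u (c • w) = starRingEnd ℂ c * φ u w)
    (him : ∀ u : H, (φ u u).im = 0) (u w : H) :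
    φ w u = starRingEnd ℂ (φ u w) := by
  have e1 : (φ u w).im + (φ w u).im = 0 := by
    have h := him (u + w)
    simp only [haddL, haddR] at h
    simp only [Complex.add_im, him u, him w] at h
    linarith
  have e2 : (φ w u).re - (φ u w).re = 0 := by
    have h := him (u + Complex.I • w)
    simp only [haddL, haddR, hsmulL, hsmulR, Complex.conj_I] at h
    simp only [Complex.add_im, Complex.mul_im, Complex.mul_re, Complex.neg_im, Complex.neg_re,
      Complex.I_re, Complex.I_im, him u, him w] at h
    nlinarith [h]
  apply Complex.ext
  · simp only [Complex.conj_re]; linarith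
  · simp only [Complex.conj_im]; linarith

private lemma sesq_null {H : Type*} [NormedAddCommGroup H] [InnerProductSpace ℂ H]
    (φ : H → H → ℂ)
    (haddL : ∀ u v w : H, φ (u + v) w = φ u w + φ v w)
    (hsmulL : ∀ (c : ℂ) (u w : H), φ (c • u) w = c * φ u w)
    (haddR : ∀ u v w : H, φ u (v + w) = φ u v + φ u w)
    (hsmulR : ∀ (c : ℂ) (u w : H), φ u (c • w) = starRingEnd ℂ c * φ u w)
    (hnn : ∀ u : H, 0 ≤ (φ u u).re) (him : ∀ u : H, (φ u u).im = 0)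
    {v : H} (hv : φ v v = 0) (w : H) : φ v w = 0 := by
  have herm := sesq_hermitian φ haddL hsmulL haddR hsmulR him
  have hre : ∀ w : H, (φ v w).re = 0 := by
    intro w
    by_contra hr0
    have hwv : (φ w v).re = (φ v w).re := by rw [herm v w, Complex.conj_re]
    have hc0 : 0 ≤ (φ w w).re := hnn w
    set r : ℝ := (φ v w).re with hrdef
    set c : ℝ := (φ w w).re with hcdef
    set t : ℝ := -r / (c + 1) with htdef
    have hexp : (φ (v + (t : ℂ) • w) (v + (t : ℂ) • w)).re = 2 * t * r + t * t * c := by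
      simp only [haddL, haddR, hsmulL, hsmulR, hv, Complex.conj_ofReal, zero_add,
        Complex.add_re, Complex.re_ofReal_mul, hwv]
      ring
    have h := hnn (v + (t : ℂ) • w)
    rw [hexp] at h
    have hc1 : (0:ℝ) < c + 1 := by linarith
    have ht1 : t * (c + 1) = -r := by
      rw [htdef]; field_simp
    have hr2 : 0 < r * r := mul_self_pos.mpr hr0
    nlinarith [h, ht1, hc0, hr2, mul_pos hc1 hc1]
  have him2 : (φ v w).im = 0 := by
    have h := hre (Complex.I • w)
    rw [hsmulR, Complex.conj_I] at h
    simp only [Complex.mul_re, Complex.neg_re, Complex.neg_im, Complex.I_re, Complex.I_im] at h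
    linarith
  exact Complex.ext (hre w) him2

open scoped RealInnerProductSpace

theorem statement3
    {n : ℕ} (hn : 0 < n) {H : Type*} [NormedAddCommGroup H] [InnerProductSpace ℂ H]
    [CompleteSpace H] (S : FormFamily n H)
    (K : ℝ) (hK0 : 0 < K)
    (hK : ∀ θ₁ ∈ S.Θ, ∀ θ₂ ∈ S.Θ, ∀ u : H, S.nrm θ₁ u ≤ K * S.nrm θ₂ u)
    (La : ℝ) (hLa0 : 0 < La)
    (hLa : ∀ θ₁ ∈ S.Θ, ∀ θ₂ ∈ S.Θ, ∀ u w : H,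
      ‖S.a θ₁ u w - S.a θ₂ u w‖ ≤ La * ‖θ₁ - θ₂‖ * S.nrm θ₁ u * S.nrm θ₁ w)
    (h0 : (0 : EuclideanSpace ℝ (Fin n)) ∈ S.Θ)
    (ν₀ : ℝ) (hν₀ : 0 < ν₀)
    (hgap0 : ∀ w ∈ S.W 0, ν₀ * S.nsq 0 w ≤ (S.a 0 w w).re)
 :
    ∀ θ ∈ S.Θ, ‖θ‖ ≤ ν₀ / (2 * La) → ∀ v₀ ∈ S.V 0,
      ∃ N ∈ S.W 0,
        (∀ w ∈ S.W 0, S.a θ N w = - S.a θ v₀ w) ∧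
          (∀ N' ∈ S.W 0, (∀ w ∈ S.W 0, S.a θ N' w = - S.a θ v₀ w) → N' = N) ∧
            S.nrm 0 N ≤ 2 * La * ν₀⁻¹ * ‖θ‖ * S.nrm 0 v₀ ∧
              S.nrm 0 v₀ ≤ S.nrm 0 (v₀ + N) ∧ S.nrm 0 (v₀ + N) ≤ 2 * S.nrm 0 v₀ := by
  intro θ hθΘ hθ v₀ hv₀
  -- basic norm facts
  have hnsq_eq : ∀ u : H, S.nsq 0 u = (S.a 0 u u).re + (S.b 0 u u).re := fun u => by
    simp [FormFamily.nsq, FormFamily.ip]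
  have hnsq0 : ∀ u : H, 0 ≤ S.nsq 0 u := fun u => by
    rw [hnsq_eq]; exact add_nonneg (S.a_nonneg 0 h0 u) (S.b_nonneg 0 h0 u)
  have hnrm_sq : ∀ u : H, S.nrm 0 u * S.nrm 0 u = S.nsq 0 u := fun u =>
    Real.mul_self_sqrt (hnsq0 u)
  have hnrm_nonneg : ∀ u : H, 0 ≤ S.nrm 0 u := fun _ => Real.sqrt_nonneg _
  -- hermitian symmetry and degeneracy of a₀ at v₀
  have hermip : ∀ u w : H, S.ip 0 w u = starRingEnd ℂ (S.ip 0 u w) :=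
    sesq_hermitian _
      (fun u v w => by simp only [FormFamily.ip, S.a_addL 0 h0, S.b_addL 0 h0]; ring)
      (fun c u w => by simp only [FormFamily.ip, S.a_smulL 0 h0, S.b_smulL 0 h0]; ring)
      (fun u v w => by simp only [FormFamily.ip, S.a_addR 0 h0, S.b_addR 0 h0]; ring)
      (fun c u w => by simp only [FormFamily.ip, S.a_smulR 0 h0, S.b_smulR 0 h0]; ring)
      (fun u => by
        simp only [FormFamily.ip, Complex.add_im, S.a_im 0 h0, S.b_im 0 h0, add_zero])
  have ha0v₀ : ∀ w : H, S.a 0 v₀ w = 0 :=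
    sesq_null _ (S.a_addL 0 h0) (S.a_smulL 0 h0) (S.a_addR 0 h0) (S.a_smulR 0 h0)
      (S.a_nonneg 0 h0) (S.a_im 0 h0) hv₀
  -- linearity of ip 0 in the first variable
  have hipaddL : ∀ u v w : H, S.ip 0 (u + v) w = S.ip 0 u w + S.ip 0 v w := fun u v w => by
    simp only [FormFamily.ip, S.a_addL 0 h0, S.b_addL 0 h0]; ring
  have hipsmulL : ∀ (c : ℂ) (u w : H), S.ip 0 (c • u) w = c * S.ip 0 u w := fun c u w => by
    simp only [FormFamily.ip, S.a_smulL 0 h0, S.b_smulL 0 h0]; ring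
  -- W₀ as a closed submodule
  let Wsub : Submodule ℂ H :=
    { carrier := S.W 0
      add_mem' := by
        intro x y hx hy v hv
        rw [hipaddL, hx v hv, hy v hv, add_zero]
      zero_mem' := by
        intro v hv
        have h := hipsmulL 0 0 v
        simpa using h
      smul_mem' := by
        intro c x hx v hv
        rw [hipsmulL, hx v hv, mul_zero] }
  have hWclosed : IsClosed (S.W 0 : Set H) := by
    have hrw : (S.W 0 : Set H) = ⋂ v ∈ S.V 0, {w : H | S.ip 0 w v = 0} := by
      ext w
      simp only [FormFamily.W, Set.mem_setOf_eq, Set.mem_iInter]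
    rw [hrw]
    refine isClosed_biInter fun v hv => ?_
    obtain ⟨Ca0, hCa0⟩ := S.a_bdd 0 h0
    obtain ⟨Cb0, hCb0⟩ := S.b_bdd 0 h0
    have hcont : Continuous fun w : H => S.ip 0 w v := by
      let L : H →ₗ[ℂ] ℂ :=
        { toFun := fun w => S.ip 0 w v
          map_add' := fun x y => hipaddL x y v
          map_smul' := fun c x => hipsmulL c x v }
      exact (L.mkContinuous ((Ca0 + Cb0) * ‖v‖) (fun w => by
        calc ‖S.ip 0 w v‖ ≤ ‖S.a 0 w v‖ + ‖S.b 0 w v‖ := norm_add_le _ _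
          _ ≤ Ca0 * ‖w‖ * ‖v‖ + Cb0 * ‖w‖ * ‖v‖ := add_le_add (hCa0 w v) (hCb0 w v)
          _ = (Ca0 + Cb0) * ‖v‖ * ‖w‖ := by ring)).continuous
    exact isClosed_eq hcont continuous_const
  haveI : CompleteSpace Wsub := hWclosed.completeSpace_coe
  letI : InnerProductSpace ℝ Wsub := InnerProductSpace.complexToReal
  have coe_rsmul : ∀ (c : ℝ) (x : Wsub), ((c • x : Wsub) : H) = (c : ℂ) • (x : H) :=
    fun c x => rfl
  -- the bilinear form B u w = Re a_θ(u, w) on Wsub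
  obtain ⟨Ca, hCa⟩ := S.a_bdd θ hθΘ
  let B : Wsub →L[ℝ] Wsub →L[ℝ] ℝ :=
    LinearMap.mkContinuous₂
      (LinearMap.mk₂ ℝ (fun u w : Wsub => (S.a θ (u : H) (w : H)).re)
        (fun x y w => by
          simp only [Submodule.coe_add, S.a_addL θ hθΘ, Complex.add_re])
        (fun c x w => by
          simp only [coe_rsmul, S.a_smulL θ hθΘ, Complex.re_ofReal_mul, smul_eq_mul])
        (fun u x y => by
          simp only [Submodule.coe_add, S.a_addR θ hθΘ, Complex.add_re])
        (fun c u w => by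
          simp only [coe_rsmul, S.a_smulR θ hθΘ, Complex.conj_ofReal,
            Complex.re_ofReal_mul, smul_eq_mul]))
      |Ca| (fun u w => by
        calc ‖(S.a θ (u : H) (w : H)).re‖ = |(S.a θ (u : H) (w : H)).re| :=
              Real.norm_eq_abs _
          _ ≤ ‖S.a θ (u : H) (w : H)‖ := by
              exact Complex.abs_re_le_norm _
          _ ≤ Ca * ‖(u : H)‖ * ‖(w : H)‖ := hCa _ _
          _ ≤ |Ca| * ‖(u : H)‖ * ‖(w : H)‖ := by
              have := le_abs_self Ca
              have h1 : (0:ℝ) ≤ ‖(u : H)‖ * ‖(w : H)‖ := by positivity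
              nlinarith
          _ = |Ca| * ‖u‖ * ‖w‖ := rfl)
  have hBapp : ∀ u w : Wsub, B u w = (S.a θ (u : H) (w : H)).re := fun u w => rfl
  -- coercivity
  have hLaθ : La * ‖θ‖ ≤ ν₀ / 2 := by
    have h := mul_le_mul_of_nonneg_left hθ (le_of_lt hLa0)
    calc La * ‖θ‖ ≤ La * (ν₀ / (2 * La)) := h
      _ = ν₀ / 2 := by field_simp
  have hcoer : ∀ w : H, w ∈ S.W 0 → ν₀ / 2 * S.nsq 0 w ≤ (S.a θ w w).re := by
    intro w hw
    have hd := hLa 0 h0 θ hθΘ w w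
    rw [zero_sub, norm_neg] at hd
    have h1 : (S.a 0 w w).re - (S.a θ w w).re ≤ La * ‖θ‖ * S.nsq 0 w := by
      have hle : (S.a 0 w w).re - (S.a θ w w).re ≤ ‖S.a 0 w w - S.a θ w w‖ := by
        calc (S.a 0 w w).re - (S.a θ w w).re = (S.a 0 w w - S.a θ w w).re := by
              rw [Complex.sub_re]
          _ ≤ |(S.a 0 w w - S.a θ w w).re| := le_abs_self _
          _ ≤ ‖S.a 0 w w - S.a θ w w‖ := by
              exact Complex.abs_re_le_norm _
      apply hle.trans
      calc ‖S.a 0 w w - S.a θ w w‖ ≤ La * ‖θ‖ * S.nrm 0 w * S.nrm 0 w := hd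
        _ = La * ‖θ‖ * S.nsq 0 w := by rw [mul_assoc, hnrm_sq]
    have h2 := hgap0 w hw
    have h3 : La * ‖θ‖ * S.nsq 0 w ≤ ν₀ / 2 * S.nsq 0 w :=
      mul_le_mul_of_nonneg_right hLaθ (hnsq0 w)
    linarith
  obtain ⟨c₁, c₂, hc₁, hcc⟩ := S.equivNorm 0 h0
  have hcoB : IsCoercive B := by
    refine ⟨ν₀ / 2 * c₁, by positivity, fun u => ?_⟩
    have h1 := hcoer (u : H) u.2
    have h2 := (hcc (u : H)).1
    rw [hBapp]
    have h3 : c₁ * (‖(u : H)‖ * ‖(u : H)‖) ≤ S.nsq 0 (u : H) := by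
      rw [hnsq_eq]
      calc c₁ * (‖(u : H)‖ * ‖(u : H)‖) = c₁ * ‖(u : H)‖ ^ 2 := by ring
        _ ≤ _ := h2
    have h4 : ν₀ / 2 * (c₁ * (‖(u : H)‖ * ‖(u : H)‖)) ≤ ν₀ / 2 * S.nsq 0 (u : H) :=
      mul_le_mul_of_nonneg_left h3 (by positivity)
    calc ν₀ / 2 * c₁ * ‖u‖ * ‖u‖ = ν₀ / 2 * (c₁ * (‖(u : H)‖ * ‖(u : H)‖)) := by
          rw [show ‖u‖ = ‖(u : H)‖ from rfl]; ring
      _ ≤ ν₀ / 2 * S.nsq 0 (u : H) := h4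
      _ ≤ (S.a θ (u : H) (u : H)).re := h1
  -- the right-hand side functional
  let f : Wsub →L[ℝ] ℝ :=
    LinearMap.mkContinuous
      { toFun := fun w : Wsub => (-(S.a θ v₀ (w : H))).re
        map_add' := fun x y => by
          simp only [Submodule.coe_add, S.a_addR θ hθΘ, Complex.neg_re, Complex.add_re]
          ring
        map_smul' := fun c x => by
          simp only [coe_rsmul, S.a_smulR θ hθΘ, Complex.conj_ofReal, Complex.neg_re,
            Complex.re_ofReal_mul, smul_eq_mul, RingHom.id_apply]
          ring }
      (|Ca| * ‖v₀‖) (fun w => by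
        calc ‖(-(S.a θ v₀ (w : H))).re‖ = |(-(S.a θ v₀ (w : H))).re| := Real.norm_eq_abs _
          _ ≤ ‖-(S.a θ v₀ (w : H))‖ := by
              exact Complex.abs_re_le_norm _
          _ = ‖S.a θ v₀ (w : H)‖ := norm_neg _
          _ ≤ Ca * ‖v₀‖ * ‖(w : H)‖ := hCa _ _
          _ ≤ |Ca| * ‖v₀‖ * ‖(w : H)‖ := by
              have := le_abs_self Ca
              have h1 : (0:ℝ) ≤ ‖v₀‖ * ‖(w : H)‖ := by positivity
              nlinarith
          _ = |Ca| * ‖v₀‖ * ‖w‖ := rfl)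
  -- Lax–Milgram solution
  obtain ⟨Nw, hBN⟩ : ∃ Nw : Wsub, ∀ w : Wsub, B Nw w = f w := by
    refine ⟨hcoB.continuousLinearEquivOfBilin.symm
      ((InnerProductSpace.toDual ℝ Wsub).symm f), fun w => ?_⟩
    have h1 := hcoB.continuousLinearEquivOfBilin_apply
      (hcoB.continuousLinearEquivOfBilin.symm ((InnerProductSpace.toDual ℝ Wsub).symm f)) w
    rw [ContinuousLinearEquiv.apply_symm_apply] at h1
    rw [← h1]
    exact InnerProductSpace.toDual_symm_apply
  -- the complex-valued equation
  have hre : ∀ w : H, w ∈ S.W 0 → (S.a θ (Nw : H) w + S.a θ v₀ w).re = 0 := by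
    intro w hw
    have h := hBN ⟨w, hw⟩
    rw [hBapp] at h
    simp only [Complex.neg_re] at h
    rw [Complex.add_re]
    have : f ⟨w, hw⟩ = (-(S.a θ v₀ w)).re := rfl
    rw [this, Complex.neg_re] at h
    linarith
  have hNsol : ∀ w ∈ S.W 0, S.a θ (Nw : H) w = -S.a θ v₀ w := by
    intro w hw
    have h1 := hre w hw
    have hIw : (Complex.I • w) ∈ S.W 0 := Wsub.smul_mem Complex.I hw
    have h2 := hre (Complex.I • w) hIw
    rw [S.a_smulR θ hθΘ, S.a_smulR θ hθΘ, Complex.conj_I] at h2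
    simp only [Complex.add_re, Complex.mul_re, Complex.neg_re, Complex.neg_im,
      Complex.I_re, Complex.I_im] at h2
    have : S.a θ (Nw : H) w + S.a θ v₀ w = 0 := by
      apply Complex.ext
      · simpa using h1
      · simp only [Complex.add_im, Complex.zero_im]; linarith
    exact eq_neg_of_add_eq_zero_left this
  -- subtraction rule
  have hnegL : ∀ u w : H, S.a θ (-u) w = -S.a θ u w := fun u w => by
    have h := S.a_smulL θ hθΘ (-1) u w
    simpa using h
  have hsubL : ∀ u v w : H, S.a θ (u - v) w = S.a θ u w - S.a θ v w := fun u v w => by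
    rw [sub_eq_add_neg, S.a_addL θ hθΘ, hnegL, sub_eq_add_neg]
  -- uniqueness
  have huniq : ∀ N' ∈ S.W 0, (∀ w ∈ S.W 0, S.a θ N' w = -S.a θ v₀ w) → N' = (Nw : H) := by
    intro N' hN' hsol
    have hdW : N' - (Nw : H) ∈ S.W 0 := Wsub.sub_mem hN' Nw.2
    have e1 : S.a θ N' (N' - (Nw : H)) = -S.a θ v₀ (N' - (Nw : H)) := hsol _ hdW
    have e2 : S.a θ (Nw : H) (N' - (Nw : H)) = -S.a θ v₀ (N' - (Nw : H)) := hNsol _ hdW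
    have hzero : S.a θ (N' - (Nw : H)) (N' - (Nw : H)) = 0 := by
      rw [hsubL, e1, e2]; ring
    have hq := hcoer (N' - (Nw : H)) hdW
    rw [hzero] at hq
    simp only [Complex.zero_re] at hq
    have hn : S.nsq 0 (N' - (Nw : H)) = 0 := by
      have := hnsq0 (N' - (Nw : H))
      nlinarith
    have h2 := (hcc (N' - (Nw : H))).1
    rw [← hnsq_eq, hn] at h2
    have hsq : ‖N' - (Nw : H)‖ ^ 2 ≤ 0 := by nlinarith [hc₁]
    have hx : ‖N' - (Nw : H)‖ ^ 2 = 0 := le_antisymm hsq (sq_nonneg _)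
    have hnorm : ‖N' - (Nw : H)‖ = 0 := by
      simpa using hx
    have : N' - (Nw : H) = 0 := norm_eq_zero.mp hnorm
    exact sub_eq_zero.mp this
  -- norm bound for Nw
  have hbd : S.nrm 0 (Nw : H) ≤ 2 * La * ν₀⁻¹ * ‖θ‖ * S.nrm 0 v₀ := by
    have h1 := hcoer (Nw : H) Nw.2
    have h2 : S.a θ (Nw : H) (Nw : H) = -S.a θ v₀ (Nw : H) := hNsol _ Nw.2
    have h3 : ‖S.a θ v₀ (Nw : H)‖ ≤ La * ‖θ‖ * S.nrm 0 v₀ * S.nrm 0 (Nw : H) := by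
      have h := hLa 0 h0 θ hθΘ v₀ (Nw : H)
      rw [zero_sub, norm_neg, ha0v₀ (Nw : H), zero_sub, norm_neg] at h
      exact h
    have h4 : (S.a θ (Nw : H) (Nw : H)).re ≤ La * ‖θ‖ * S.nrm 0 v₀ * S.nrm 0 (Nw : H) := by
      rw [h2]
      calc (-S.a θ v₀ (Nw : H)).re ≤ |(-S.a θ v₀ (Nw : H)).re| := le_abs_self _
        _ ≤ ‖-S.a θ v₀ (Nw : H)‖ := by
            exact Complex.abs_re_le_norm _
        _ = ‖S.a θ v₀ (Nw : H)‖ := norm_neg _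
        _ ≤ _ := h3
    rw [← hnrm_sq (Nw : H)] at h1
    by_cases hz : S.nrm 0 (Nw : H) = 0
    · rw [hz]
      have : (0:ℝ) ≤ 2 * La * ν₀⁻¹ * ‖θ‖ * S.nrm 0 v₀ := by
        have := hnrm_nonneg v₀; positivity
      exact this
    · have hpos : 0 < S.nrm 0 (Nw : H) := lt_of_le_of_ne (hnrm_nonneg _) (Ne.symm hz)
      have h5 : (ν₀ / 2 * S.nrm 0 (Nw : H)) * S.nrm 0 (Nw : H)
          ≤ (La * ‖θ‖ * S.nrm 0 v₀) * S.nrm 0 (Nw : H) := by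
        calc (ν₀ / 2 * S.nrm 0 (Nw : H)) * S.nrm 0 (Nw : H)
            = ν₀ / 2 * (S.nrm 0 (Nw : H) * S.nrm 0 (Nw : H)) := by ring
          _ ≤ (S.a θ (Nw : H) (Nw : H)).re := h1
          _ ≤ La * ‖θ‖ * S.nrm 0 v₀ * S.nrm 0 (Nw : H) := h4
      have h6 : ν₀ / 2 * S.nrm 0 (Nw : H) ≤ La * ‖θ‖ * S.nrm 0 v₀ :=
        le_of_mul_le_mul_right h5 hpos
      have h7 := mul_le_mul_of_nonneg_left h6 (by positivity : (0:ℝ) ≤ 2 * ν₀⁻¹)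
      calc S.nrm 0 (Nw : H) = 2 * ν₀⁻¹ * (ν₀ / 2 * S.nrm 0 (Nw : H)) := by
            field_simp
        _ ≤ 2 * ν₀⁻¹ * (La * ‖θ‖ * S.nrm 0 v₀) := h7
        _ = 2 * La * ν₀⁻¹ * ‖θ‖ * S.nrm 0 v₀ := by ring
  -- pythagoras
  have hipNv : S.ip 0 (Nw : H) v₀ = 0 := Nw.2 v₀ hv₀
  have hipvN : S.ip 0 v₀ (Nw : H) = 0 := by
    rw [hermip (Nw : H) v₀, hipNv, map_zero]
  have hipaddR : ∀ u v w : H, S.ip 0 u (v + w) = S.ip 0 u v + S.ip 0 u w := fun u v w => by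
    simp only [FormFamily.ip, S.a_addR 0 h0, S.b_addR 0 h0]; ring
  have hpyth : S.nsq 0 (v₀ + (Nw : H)) = S.nsq 0 v₀ + S.nsq 0 (Nw : H) := by
    show (S.ip 0 (v₀ + (Nw : H)) (v₀ + (Nw : H))).re = _
    rw [hipaddL, hipaddR, hipaddR, hipvN, hipNv]
    simp only [add_zero, zero_add, Complex.add_re]
    rfl
  have hlower : S.nrm 0 v₀ ≤ S.nrm 0 (v₀ + (Nw : H)) := by
    simp only [FormFamily.nrm]
    apply Real.sqrt_le_sqrt
    rw [hpyth]
    linarith [hnsq0 ((Nw : H))]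
  have hcoef : 2 * La * ν₀⁻¹ * ‖θ‖ ≤ 1 := by
    have h := mul_le_mul_of_nonneg_left hθ (by positivity : (0:ℝ) ≤ 2 * La * ν₀⁻¹)
    calc 2 * La * ν₀⁻¹ * ‖θ‖ ≤ 2 * La * ν₀⁻¹ * (ν₀ / (2 * La)) := h
      _ = 1 := by field_simp
  have hupper : S.nrm 0 (v₀ + (Nw : H)) ≤ 2 * S.nrm 0 v₀ := by
    have hNle : S.nrm 0 (Nw : H) ≤ S.nrm 0 v₀ := by
      calc S.nrm 0 (Nw : H) ≤ 2 * La * ν₀⁻¹ * ‖θ‖ * S.nrm 0 v₀ := hbd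
        _ ≤ 1 * S.nrm 0 v₀ := mul_le_mul_of_nonneg_right hcoef (hnrm_nonneg _)
        _ = S.nrm 0 v₀ := one_mul _
    have h1 : S.nsq 0 (v₀ + (Nw : H)) ≤ (2 * S.nrm 0 v₀) * (2 * S.nrm 0 v₀) := by
      rw [hpyth, ← hnrm_sq v₀, ← hnrm_sq (Nw : H)]
      nlinarith [hnrm_nonneg v₀, hnrm_nonneg ((Nw : H)), hNle]
    calc S.nrm 0 (v₀ + (Nw : H)) = Real.sqrt (S.nsq 0 (v₀ + (Nw : H))) := rfl
      _ ≤ Real.sqrt ((2 * S.nrm 0 v₀) * (2 * S.nrm 0 v₀)) := Real.sqrt_le_sqrt h1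
      _ = 2 * S.nrm 0 v₀ := Real.sqrt_mul_self (by linarith [hnrm_nonneg v₀])
  exact ⟨(Nw : H), Nw.2, hNsol, huniq, hbd, hlower, hupper⟩
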